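/- Let α ∈ (0,1), P = (x_P,y_P), E = (x_E,y_E) with d = dist(E,P) > 0, and aimpoint I = (x*,y*) with x* = (x_E-α²x_P)/(1-α²), y* = (y_E-α²y_P-αd)/(1-α²). Assume I ≠ E and I ≠ P. Let u_E = (I-E)/dist(I,E) and u_P = (I-P)/dist(I,P) be the optimal unit heading vectors, and let ∇_E y̲, ∇_P y̲ denote the gradients of y̲ = (y_E-α²y_P-αd)/(1-α²) with respect to evader and pursuer coordinates. Then for any v_P > 0 and v_E = α·v_P, v_E·⟨∇_E y̲, u_E⟩ + v_P·⟨∇_P y̲, u_P⟩ = 0. -/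

import Mathlib

/-- The single-pair Value contribution `y̲` satisfies the stationary HJI
equation along the optimal headings: with unit heading vectors toward the
aimpoint `I`, `v_E·⟨∇_E y̲, u_E⟩ + v_P·⟨∇_P y̲, u_P⟩ = 0`. -/
theorem hji_single_pair (xP yP xE yE α vP vE : ℝ)
    (hα0 : 0 < α) (hα1 : α < 1)
    (hvP : 0 < vP) (hvE : vE = α * vP)
    (d : ℝ) (hd : d = Real.sqrt ((xE - xP)^2 + (yE - yP)^2)) (hdpos : 0 < d)
    (xs ys : ℝ)
    (hxs : xs = (xE - α^2 * xP) / (1 - α^2))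
    (hys : ys = (yE - α^2 * yP - α * d) / (1 - α^2))
    (hIE : (xs, ys) ≠ (xE, yE)) (hIP : (xs, ys) ≠ (xP, yP)) :
    vE * ((-(α / (1 - α^2)) * (xE - xP) / d)
            * ((xs - xE) / Real.sqrt ((xs - xE)^2 + (ys - yE)^2))
          + ((1 / (1 - α^2)) * (1 - α * (yE - yP) / d))
            * ((ys - yE) / Real.sqrt ((xs - xE)^2 + (ys - yE)^2)))
      + vP * (((α / (1 - α^2)) * (xE - xP) / d)
            * ((xs - xP) / Real.sqrt ((xs - xP)^2 + (ys - yP)^2))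
          + ((α / (1 - α^2)) * (-α + (yE - yP) / d))
            * ((ys - yP) / Real.sqrt ((xs - xP)^2 + (ys - yP)^2))) = 0 := by
  have hkpos : (0:ℝ) < 1 - α^2 := by nlinarith
  set k := 1 - α^2 with hkdef
  have hk0 : k ≠ 0 := ne_of_gt hkpos
  set a := xE - xP with ha
  set b := yE - yP with hb
  have hd2 : d^2 = a^2 + b^2 := by
    rw [hd, Real.sq_sqrt (by positivity)]
  set R := Real.sqrt (α^2*a^2 + (α*b - d)^2) with hR
  have hR2 : R^2 = α^2*a^2 + (α*b - d)^2 := Real.sq_sqrt (by positivity)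
  have hRpos : 0 < R := by
    apply Real.sqrt_pos.mpr
    have h1 : α^2*a^2 + (α*b - d)^2 = (1-α)^2*d^2 + α*(d-b)^2 + α*a^2 := by
      linear_combination (α - α^2) * hd2
    have h2 : 0 < (1-α)^2*d^2 :=
      mul_pos (pow_pos (by linarith) 2) (pow_pos hdpos 2)
    nlinarith [mul_nonneg hα0.le (sq_nonneg (d-b)), mul_nonneg hα0.le (sq_nonneg a)]
  have hxsE : xs - xE = α^2 * a / k := by
    rw [hxs, ha]; field_simp; ring
  have hysE : ys - yE = α * (α*b - d) / k := by
    rw [hys, hb]; field_simp; ring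
  have hxsP : xs - xP = a / k := by
    rw [hxs, ha]; field_simp; ring
  have hysP : ys - yP = (b - α*d) / k := by
    rw [hys, hb]; field_simp; ring
  have hE : Real.sqrt ((xs-xE)^2+(ys-yE)^2) = α * R / k := by
    have h : (xs-xE)^2+(ys-yE)^2 = (α * R / k)^2 := by
      rw [hxsE, hysE]
      field_simp
      linear_combination (-(1:ℝ)) * hR2
    rw [h, Real.sqrt_sq (by positivity)]
  have hP : Real.sqrt ((xs-xP)^2+(ys-yP)^2) = R / k := by
    have h : (xs-xP)^2+(ys-yP)^2 = (R / k)^2 := by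
      rw [hxsP, hysP]
      field_simp
      linear_combination (-(1:ℝ)) * hR2 - k * hd2
    rw [h, Real.sqrt_sq (by positivity)]
  rw [hE, hP, hxsE, hysE, hxsP, hysP, hvE]
  have hd0 : d ≠ 0 := ne_of_gt hdpos
  have hR0 : R ≠ 0 := ne_of_gt hRpos
  have hα0' : α ≠ 0 := ne_of_gt hα0
  field_simp
  linear_combination (-(α * vP * k)) * hd2
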